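/- For all positive reals a, b: S(a,b) − H(a,b) ≤ 2(S(a,b) − N1(a,b)) and S(a,b) − N1(a,b) ≤ (3/4)(S(a,b) − G(a,b)), where S(a,b) = √((a²+b²)/2), H(a,b) = 2ab/(a+b), N1(a,b) = ((√a+√b)/2)², G(a,b) = √(ab). -/

import Mathlib

theorem msh_msn1 (a b : ℝ) (ha : 0 < a) (hb : 0 < b) :
    Real.sqrt ((a ^ 2 + b ^ 2) / 2) - 2 * a * b / (a + b) ≤
      2 * (Real.sqrt ((a ^ 2 + b ^ 2) / 2) - ((Real.sqrt a + Real.sqrt b) / 2) ^ 2) ∧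
    Real.sqrt ((a ^ 2 + b ^ 2) / 2) - ((Real.sqrt a + Real.sqrt b) / 2) ^ 2 ≤
      (3/4) * (Real.sqrt ((a ^ 2 + b ^ 2) / 2) - Real.sqrt (a * b)) := by
  have hab : 0 < a + b := by linarith
  set g := Real.sqrt (a * b) with hgdef
  set s := Real.sqrt ((a ^ 2 + b ^ 2) / 2) with hsdef
  have hg0 : 0 ≤ g := Real.sqrt_nonneg _
  have hg2 : g ^ 2 = a * b := Real.sq_sqrt (by positivity)
  have hN : ((Real.sqrt a + Real.sqrt b) / 2) ^ 2 = (a + b + 2 * g) / 4 := by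
    rw [div_pow, add_sq, Real.sq_sqrt ha.le, Real.sq_sqrt hb.le, mul_assoc,
      ← Real.sqrt_mul ha.le]
    ring
  have hAG : 2 * g ≤ a + b := by nlinarith [sq_nonneg (a - b), sq_nonneg (2 * g - a - b)]
  -- upper bound : s ≤ a + b - g
  have hub : s ≤ a + b - g := by
    have h1 : (a ^ 2 + b ^ 2) / 2 ≤ (a + b - g) ^ 2 := by
      nlinarith [sq_nonneg (a + b - 2 * g)]
    calc s ≤ Real.sqrt ((a + b - g) ^ 2) := Real.sqrt_le_sqrt h1
      _ = a + b - g := Real.sqrt_sq (by linarith)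
  -- lower bound : (a+b)/2 + g - 2ab/(a+b) ≤ s
  have hlb : (a + b) / 2 + g - 2 * a * b / (a + b) ≤ s := by
    have e : (a + b) / 2 + g - 2 * a * b / (a + b)
        = ((a + b) ^ 2 / 2 + g * (a + b) - 2 * a * b) / (a + b) := by
      field_simp
    have hnum : ((a + b) ^ 2 / 2 + g * (a + b) - 2 * a * b) ^ 2
        ≤ (a ^ 2 + b ^ 2) / 2 * (a + b) ^ 2 := by
      have hd : 0 ≤ (a + b) / 2 - g := by linarith
      have hs' : 0 ≤ (a + b) / 2 + g := by linarith
      nlinarith [mul_nonneg (mul_nonneg (mul_nonneg hd hd) hd) hs']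
    have h2 : ((a + b) / 2 + g - 2 * a * b / (a + b)) ^ 2 ≤ (a ^ 2 + b ^ 2) / 2 := by
      rw [e, div_pow, div_le_iff₀ (by positivity)]
      exact hnum
    calc (a + b) / 2 + g - 2 * a * b / (a + b)
        ≤ |(a + b) / 2 + g - 2 * a * b / (a + b)| := le_abs_self _
      _ = Real.sqrt (((a + b) / 2 + g - 2 * a * b / (a + b)) ^ 2) :=
          (Real.sqrt_sq_eq_abs _).symm
      _ ≤ s := Real.sqrt_le_sqrt h2
  constructor
  · rw [hN]; linarith
  · rw [hN]; linarith
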